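/- arXiv:2106.02440 — 2 statements merged into one kernel-verified Lean document; each statement's English description precedes it below -/
import Mathlib

section
/- Let Δ ≥ 1 and let a, x be integers with 0 ≤ x and x + 2 ≤ a ≤ Δ. Let Σ' be the family of eight subsets of Σ = {M,P,O,A,X} given by {X}, {M,X}, {O,X}, {M,O,X}, {A,O,X}, {M,A,O,X}, {P,A,O,X}, {M,P,A,O,X}. For every function f : Fin Δ → Σ', there exists a function g : Fin Δ → Σ with g(i) ∈ f(i) for all i whose multiset of values lies in N_Δ(a,x) if and only if at least one of the following holds: (1) the number of indices i with M ∈ f(i) is at least Δ − x; (2) there exists an index i with P ∈ f(i) such that O ∈ f(j) for all j ≠ i; (3) the number of indices i with A ∈ f(i) is at least a. -/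
inductive Lab : Type
  | M | P | O | A | X
  deriving DecidableEq

instance : Fintype Lab where
  elems := {Lab.M, Lab.P, Lab.O, Lab.A, Lab.X}
  complete := by intro l; cases l <;> simp

/-- Node constraint `N_Δ(a,x)`: the three allowed multisets of size `Δ`. -/
def nodeC (Δ a x : ℕ) (m : Multiset Lab) : Prop :=
  m = Multiset.replicate (Δ - x) Lab.M + Multiset.replicate x Lab.X ∨
  m = Multiset.replicate a Lab.A + Multiset.replicate (Δ - a) Lab.X ∨
  m = Lab.P ::ₘ Multiset.replicate (Δ - 1) Lab.O

/-- Edge constraint `E`: all unordered pairs except `{M,M}, {A,A}, {P,P}, {P,A}, {P,O}`. -/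
def edgeC (l₁ l₂ : Lab) : Prop :=
  ¬ ((l₁ = Lab.M ∧ l₂ = Lab.M) ∨ (l₁ = Lab.A ∧ l₂ = Lab.A) ∨ (l₁ = Lab.P ∧ l₂ = Lab.P) ∨
     (l₁ = Lab.P ∧ l₂ = Lab.A) ∨ (l₁ = Lab.A ∧ l₂ = Lab.P) ∨
     (l₁ = Lab.P ∧ l₂ = Lab.O) ∨ (l₁ = Lab.O ∧ l₂ = Lab.P))

instance (l₁ l₂ : Lab) : Decidable (edgeC l₁ l₂) := by
  unfold edgeC; infer_instance

/-- A valid `Π_Δ(a,x)`-labeling: `ℓ u v` is the label that `u` assigns to the edge `{u,v}`. -/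
def validLabeling {V : Type*} [Fintype V] (G : SimpleGraph V) [DecidableRel G.Adj]
    (Δ a x : ℕ) (ℓ : V → V → Lab) : Prop :=
  (∀ v : V, nodeC Δ a x ((G.neighborFinset v).val.map (ℓ v))) ∧
  (∀ u v : V, G.Adj u v → edgeC (ℓ u v) (ℓ v u))

/-- The alphabet `Σ'` of `re(Π_Δ(a,x))`: eight subsets of `Σ`. -/
def sigmaRE : Set (Finset Lab) :=
  {({Lab.X} : Finset Lab), {Lab.M, Lab.X}, {Lab.O, Lab.X}, {Lab.M, Lab.O, Lab.X},
   {Lab.A, Lab.O, Lab.X}, {Lab.M, Lab.A, Lab.O, Lab.X},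
   {Lab.P, Lab.A, Lab.O, Lab.X}, {Lab.M, Lab.P, Lab.A, Lab.O, Lab.X}}

lemma count_map_univ {Δ : ℕ} (g : Fin Δ → Lab) (l : Lab) :
    (Finset.univ.val.map g).count l = (Finset.univ.filter (fun i => g i = l)).card := by
  rw [Multiset.count_map]
  have h : (Finset.filter (fun i => g i = l) Finset.univ).card
      = Multiset.card (Multiset.filter (fun i => g i = l) Finset.univ.val) := rfl
  rw [h]
  congr 1
  apply Multiset.filter_congr
  intro i _
  exact eq_comm

lemma map_ite {Δ : ℕ} (S : Finset (Fin Δ)) (u v : Lab) (huv : u ≠ v) :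
    Finset.univ.val.map (fun i => if i ∈ S then u else v)
      = Multiset.replicate S.card u + Multiset.replicate (Δ - S.card) v := by
  ext l
  rw [count_map_univ]
  rcases eq_or_ne l u with rfl | hu
  · have hS : Finset.univ.filter (fun i => (if i ∈ S then l else v) = l) = S := by
      ext i; by_cases h : i ∈ S <;> simp [h, huv.symm]
    simp [hS, Multiset.count_replicate, huv.symm]
  · rcases eq_or_ne l v with rfl | hv
    · have hS : Finset.univ.filter (fun i => (if i ∈ S then u else l) = l) = Sᶜ := by
        ext i; by_cases h : i ∈ S <;> simp [h, huv]
      rw [hS, Finset.card_compl]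
      simp [Multiset.count_replicate, huv, (huv.symm : l ≠ u)]
    · have hS : Finset.univ.filter (fun i => (if i ∈ S then u else v) = l) = ∅ := by
        ext i; by_cases h : i ∈ S <;> simp [h, hu.symm, hv.symm]
      simp [hS, Multiset.count_replicate, hu.symm, hv.symm]


/-- For `x + 2 ≤ a ≤ Δ` and any `f : Fin Δ → Σ'`, there is a transversal
`g` of `f` whose multiset of values lies in `N_Δ(a,x)` if and only if (1) at least `Δ − x`
of the sets contain `M`, or (2) some set contains `P` while all others contain `O`, or
(3) at least `a` of the sets contain `A`. -/
theorem stmt_2 (Δ a x : ℕ) (hΔ : 1 ≤ Δ) (hax : x + 2 ≤ a) (haΔ : a ≤ Δ)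
    (f : Fin Δ → Finset Lab) (hf : ∀ i, f i ∈ sigmaRE) :
    (∃ g : Fin Δ → Lab, (∀ i, g i ∈ f i) ∧
        nodeC Δ a x (Finset.univ.val.map g)) ↔
      (Δ - x ≤ (Finset.univ.filter (fun i => Lab.M ∈ f i)).card ∨
       (∃ i, Lab.P ∈ f i ∧ ∀ j, j ≠ i → Lab.O ∈ f j) ∨
       a ≤ (Finset.univ.filter (fun i => Lab.A ∈ f i)).card) := by
  have hX : ∀ i, Lab.X ∈ f i := by
    intro i
    have h := hf i
    simp only [sigmaRE, Set.mem_insert_iff, Set.mem_singleton_iff] at h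
    rcases h with h|h|h|h|h|h|h|h <;> rw [h] <;> decide
  constructor
  · rintro ⟨g, hg, hnode⟩
    rcases hnode with h | h | h
    · left
      have hc := congrArg (Multiset.count Lab.M) h
      rw [count_map_univ] at hc
      simp [Multiset.count_replicate] at hc
      rw [← hc]
      apply Finset.card_le_card
      intro i hi
      simp only [Finset.mem_filter, Finset.mem_univ, true_and] at hi ⊢
      rw [← hi]; exact hg i
    · right; right
      have hc := congrArg (Multiset.count Lab.A) h
      rw [count_map_univ] at hc
      simp [Multiset.count_replicate] at hc
      rw [← hc]
      apply Finset.card_le_card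
      intro i hi
      simp only [Finset.mem_filter, Finset.mem_univ, true_and] at hi ⊢
      rw [← hi]; exact hg i
    · right; left
      have hP := congrArg (Multiset.count Lab.P) h
      have hM := congrArg (Multiset.count Lab.M) h
      have hA := congrArg (Multiset.count Lab.A) h
      have hXc := congrArg (Multiset.count Lab.X) h
      rw [count_map_univ] at hP hM hA hXc
      simp [Multiset.count_replicate] at hP hM hA hXc
      obtain ⟨i, hi⟩ := Finset.card_eq_one.mp hP
      have hgi : g i = Lab.P := by
        have : i ∈ Finset.univ.filter (fun j => g j = Lab.P) := by rw [hi]; simp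
        simpa using this
      refine ⟨i, hgi ▸ hg i, ?_⟩
      intro j hj
      have hgj : g j = Lab.O := by
        have h1 : g j ≠ Lab.P := by
          intro hc
          have : j ∈ Finset.univ.filter (fun k => g k = Lab.P) := by simp [hc]
          rw [hi] at this
          exact hj (Finset.mem_singleton.mp this)
        have h2 : g j ≠ Lab.M := by
          intro hc
          have : j ∈ Finset.univ.filter (fun k => g k = Lab.M) := by simp [hc]
          exact hM hc
        have h3 : g j ≠ Lab.A := by
          intro hc
          have : j ∈ Finset.univ.filter (fun k => g k = Lab.A) := by simp [hc]
          exact hA hc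
        have h4 : g j ≠ Lab.X := by
          intro hc
          have : j ∈ Finset.univ.filter (fun k => g k = Lab.X) := by simp [hc]
          exact hXc hc
        cases hgj' : g j <;> first | rfl | (exfalso; first
          | exact h1 hgj' | exact h2 hgj' | exact h3 hgj' | exact h4 hgj')
      rw [← hgj]; exact hg j
  · rintro (h | ⟨i, hP, hO⟩ | h)
    · obtain ⟨S, hSsub, hScard⟩ := Finset.exists_subset_card_eq h
      refine ⟨fun i => if i ∈ S then Lab.M else Lab.X, ?_, ?_⟩
      · intro i
        by_cases hi : i ∈ S
        · simp only [hi, if_pos]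
          have := hSsub hi
          simp only [Finset.mem_filter] at this
          exact this.2
        · simp only [hi, if_neg, not_false_iff]
          exact hX i
      · left
        rw [map_ite S Lab.M Lab.X (by decide), hScard, Nat.sub_sub_self (by omega : x ≤ Δ)]
    · refine ⟨fun j => if j ∈ ({i} : Finset (Fin Δ)) then Lab.P else Lab.O, ?_, ?_⟩
      · intro j
        by_cases hj : j = i
        · subst hj; simpa using hP
        · simp only [Finset.mem_singleton, hj, if_neg, not_false_iff]
          exact hO j hj
      · right; right
        rw [map_ite ({i} : Finset (Fin Δ)) Lab.P Lab.O (by decide), Finset.card_singleton]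
        rw [Multiset.replicate_one, Multiset.singleton_add]
    · obtain ⟨S, hSsub, hScard⟩ := Finset.exists_subset_card_eq h
      refine ⟨fun i => if i ∈ S then Lab.A else Lab.X, ?_, ?_⟩
      · intro i
        by_cases hi : i ∈ S
        · simp only [hi, if_pos]
          have := hSsub hi
          simp only [Finset.mem_filter] at this
          exact this.2
        · simp only [hi, if_neg, not_false_iff]
          exact hX i
      · right; left
        rw [map_ite S Lab.A Lab.X (by decide), hScard]
end

section
/- Let Δ ≥ 1 and let a, a', x, x' be integers with 0 ≤ a ≤ a' ≤ Δ and 0 ≤ x' ≤ x ≤ Δ. If a finite Δ-regular simple graph G admits a valid Π_Δ(a',x')-labeling, then G admits a valid Π_Δ(a,x)-labeling. -/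
lemma edgeC_X_left (l : Lab) : edgeC Lab.X l := by cases l <;> decide

lemma edgeC_X_right (l : Lab) : edgeC l Lab.X := by cases l <;> decide

lemma flip_map {V : Type*} [DecidableEq V] (s t : Finset V) (hts : t ⊆ s)
    (f : V → Lab) (b : Lab) (hb : ∀ w ∈ t, f w = b) :
    s.val.map (fun w => if w ∈ t then Lab.X else f w) + Multiset.replicate t.card b
      = s.val.map f + Multiset.replicate t.card Lab.X := by
  have hsplit : s.val = t.val + (s \ t).val := by
    rw [Finset.sdiff_val, add_comm]
    exact (tsub_add_cancel_of_le (Finset.val_le_iff.2 hts)).symm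
  have h1 : t.val.map (fun w => if w ∈ t then Lab.X else f w)
      = Multiset.replicate t.card Lab.X := by
    rw [Multiset.eq_replicate]
    refine ⟨by rw [Multiset.card_map]; rfl, ?_⟩
    intro c hc
    obtain ⟨w, hw, rfl⟩ := Multiset.mem_map.1 hc
    rw [if_pos (Finset.mem_def.2 hw)]
  have h2 : t.val.map f = Multiset.replicate t.card b := by
    rw [Multiset.eq_replicate]
    refine ⟨by rw [Multiset.card_map]; rfl, ?_⟩
    intro c hc
    obtain ⟨w, hw, rfl⟩ := Multiset.mem_map.1 hc
    exact hb w hw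
  have h3 : (s \ t).val.map (fun w => if w ∈ t then Lab.X else f w)
      = (s \ t).val.map f := by
    refine Multiset.map_congr rfl ?_
    intro w hw
    have : w ∉ t := (Finset.mem_sdiff.1 hw).2
    simp [this]
  rw [hsplit, Multiset.map_add, Multiset.map_add, h1, h2, h3]
  abel

lemma card_filter_eq_count {V : Type*} [DecidableEq V] (s : Finset V) (f : V → Lab) (b : Lab) :
    (s.filter (fun w => f w = b)).card = Multiset.count b (s.val.map f) := by
  rw [Multiset.count_map, Finset.card, Finset.filter_val]
  congr 1
  exact Multiset.filter_congr (fun w _ => eq_comm)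

/-- (Monotonicity, Lemma 3.5.) Decreasing `a` and increasing `x` does not
make the problem harder: a valid `Π_Δ(a',x')`-labeling yields a valid `Π_Δ(a,x)`-labeling,
for `a ≤ a' ≤ Δ` and `x' ≤ x ≤ Δ`. -/
theorem stmt_5 {V : Type*} [Fintype V] (G : SimpleGraph V) [DecidableRel G.Adj]
    (Δ a a' x x' : ℕ) (hΔ : 1 ≤ Δ) (haa' : a ≤ a') (ha'Δ : a' ≤ Δ)
    (hx'x : x' ≤ x) (hxΔ : x ≤ Δ)
    (hreg : G.IsRegularOfDegree Δ)
    (ℓ' : V → V → Lab) (hvalid : validLabeling G Δ a' x' ℓ') :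
    ∃ ℓ : V → V → Lab, validLabeling G Δ a x ℓ := by
  classical
  obtain ⟨hnode, hedge⟩ := hvalid
  have key : ∀ v : V, ∃ t : Finset V, t ⊆ G.neighborFinset v ∧
      nodeC Δ a x ((G.neighborFinset v).val.map
        (fun w => if w ∈ t then Lab.X else ℓ' v w)) := by
    intro v
    set s := G.neighborFinset v with hs
    rcases hnode v with hm | ha | hp
    · -- M-type vertex: flip x - x' of the M's to X
      have hc1 : (s.filter (fun w => ℓ' v w = Lab.M)).card = Δ - x' := by
        rw [card_filter_eq_count, hm]
        simp [Multiset.count_replicate]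
      have hcount : x - x' ≤ (s.filter (fun w => ℓ' v w = Lab.M)).card := by
        rw [hc1]; omega
      obtain ⟨t, hts, htc⟩ := Finset.exists_subset_card_eq hcount
      have hts' : t ⊆ s := hts.trans (Finset.filter_subset _ _)
      refine ⟨t, hts', ?_⟩
      have hb : ∀ w ∈ t, ℓ' v w = Lab.M := fun w hw => (Finset.mem_filter.1 (hts hw)).2
      have hf := flip_map s t hts' (ℓ' v) Lab.M hb
      rw [hm, htc] at hf
      left
      have hM : Multiset.replicate (Δ - x') Lab.M
          = Multiset.replicate (Δ - x) Lab.M + Multiset.replicate (x - x') Lab.M := by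
        rw [← Multiset.replicate_add]; congr 1; omega
      have hX : Multiset.replicate x Lab.X
          = Multiset.replicate x' Lab.X + Multiset.replicate (x - x') Lab.X := by
        rw [← Multiset.replicate_add]; congr 1; omega
      apply add_right_cancel (b := Multiset.replicate (x - x') Lab.M)
      rw [hf, hM, hX]; abel
    · -- A-type vertex: flip a' - a of the A's to X
      have hc1 : (s.filter (fun w => ℓ' v w = Lab.A)).card = a' := by
        rw [card_filter_eq_count, ha]
        simp [Multiset.count_replicate]
      have hcount : a' - a ≤ (s.filter (fun w => ℓ' v w = Lab.A)).card := by
        rw [hc1]; omega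
      obtain ⟨t, hts, htc⟩ := Finset.exists_subset_card_eq hcount
      have hts' : t ⊆ s := hts.trans (Finset.filter_subset _ _)
      refine ⟨t, hts', ?_⟩
      have hb : ∀ w ∈ t, ℓ' v w = Lab.A := fun w hw => (Finset.mem_filter.1 (hts hw)).2
      have hf := flip_map s t hts' (ℓ' v) Lab.A hb
      rw [ha, htc] at hf
      right; left
      have hA : Multiset.replicate a' Lab.A
          = Multiset.replicate a Lab.A + Multiset.replicate (a' - a) Lab.A := by
        rw [← Multiset.replicate_add]; congr 1; omega
      have hX : Multiset.replicate (Δ - a) Lab.X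
          = Multiset.replicate (Δ - a') Lab.X + Multiset.replicate (a' - a) Lab.X := by
        rw [← Multiset.replicate_add]; congr 1; omega
      apply add_right_cancel (b := Multiset.replicate (a' - a) Lab.A)
      rw [hf, hA, hX]; abel
    · -- P-type vertex: change nothing
      refine ⟨∅, by simp, ?_⟩
      have he : s.val.map (fun w => if w ∈ (∅ : Finset V) then Lab.X else ℓ' v w)
          = s.val.map (ℓ' v) := Multiset.map_congr rfl (by intro w _; simp)
      rw [he]
      exact Or.inr (Or.inr hp)
  choose t ht₁ ht₂ using key
  refine ⟨fun v w => if w ∈ t v then Lab.X else ℓ' v w, ht₂, ?_⟩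
  intro u v huv
  by_cases h1 : v ∈ t u
  · simp only [if_pos h1]; exact edgeC_X_left _
  · simp only [if_neg h1]
    by_cases h2 : u ∈ t v
    · simp only [if_pos h2]; exact edgeC_X_right _
    · simp only [if_neg h2]; exact hedge u v huv
end
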